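/- Let λ ∈ ℝ^d be a probability vector and |ψ⟩ = Σ_{j=1}^d √λ_j |j⟩⊗|j⟩ ∈ ℂ^d⊗ℂ^d. Then the cross-covariance block X_ψ of the covariance matrix of |ψ⟩⟨ψ| in the canonical operator bases satisfies tr|X_ψ| = (Σ_j √λ_j)² − Σ_j λ_j². In particular, if λ has at most r nonzero entries (i.e. |ψ⟩ has Schmidt rank ≤ r), then tr|X_ψ| ≤ r − tr(ρ_a²), where ρ_a = tr_b |ψ⟩⟨ψ| is the reduced state, with tr(ρ_a²) = Σ_j λ_j². -/

import Mathlib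

open Matrix Kronecker BigOperators Finset
open scoped ComplexOrder

/-- Expectation value ⟨A⟩_ρ = Re tr(ρ A). -/
noncomputable def expval {n : Type*} [Fintype n] (ρ A : Matrix n n ℂ) : ℝ :=
  ((ρ * A).trace).re

/-- A density matrix: positive semidefinite with unit trace. -/
def IsDensityMatrix {n : Type*} [Fintype n] (ρ : Matrix n n ℂ) : Prop :=
  ρ.PosSemidef ∧ ρ.trace = 1

/-- The projector |v⟩⟨v| associated to a vector. -/
noncomputable def pureState {n : Type*} (v : n → ℂ) : Matrix n n ℂ :=
  Matrix.vecMulVec v (star v)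

/-- A normalized vector. -/
def IsUnitVec {n : Type*} [Fintype n] (v : n → ℂ) : Prop :=
  ∑ i, Complex.normSq (v i) = 1

/-- The canonical Hermitian operator basis of ℂ^d, indexed by pairs (j,k):
diagonal operators for j = k, real operators for j < k, imaginary operators for j > k. -/
noncomputable def canonG (d : ℕ) : Fin d × Fin d → Matrix (Fin d) (Fin d) ℂ := fun μ =>
  if μ.1 = μ.2 then Matrix.single μ.1 μ.1 1
  else if μ.1 < μ.2 then
    ((Real.sqrt 2 : ℂ))⁻¹ • (Matrix.single μ.1 μ.2 1 + Matrix.single μ.2 μ.1 1)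
  else
    (Complex.I * ((Real.sqrt 2 : ℂ))⁻¹) •
      (Matrix.single μ.2 μ.1 1 - Matrix.single μ.1 μ.2 1)

/-- Covariance matrix of a family of observables w.r.t. a state ρ. -/
noncomputable def covMat {n K : Type*} [Fintype n] (ρ : Matrix n n ℂ)
    (M : K → Matrix n n ℂ) : Matrix K K ℝ :=
  Matrix.of fun j k =>
    (1/2 : ℝ) * expval ρ (M j * M k + M k * M j) - expval ρ (M j) * expval ρ (M k)

/-- The local observables (g_μ ⊗ 1, 1 ⊗ g_ν) on the bipartite space. -/
noncomputable def bipObs (d : ℕ) :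
    (Fin d × Fin d) ⊕ (Fin d × Fin d) → Matrix (Fin d × Fin d) (Fin d × Fin d) ℂ :=
  Sum.elim (fun μ => canonG d μ ⊗ₖ (1 : Matrix (Fin d) (Fin d) ℂ))
           (fun ν => (1 : Matrix (Fin d) (Fin d) ℂ) ⊗ₖ canonG d ν)

/-- The full covariance matrix Γ_ρ of the canonical bipartite observables. -/
noncomputable def GammaCM (d : ℕ) (ρ : Matrix (Fin d × Fin d) (Fin d × Fin d) ℂ) :
    Matrix ((Fin d × Fin d) ⊕ (Fin d × Fin d)) ((Fin d × Fin d) ⊕ (Fin d × Fin d)) ℝ :=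
  covMat ρ (bipObs d)

/-- The cross-covariance block X_ρ. -/
noncomputable def crossCov (d : ℕ) (ρ : Matrix (Fin d × Fin d) (Fin d × Fin d) ℂ) :
    Matrix (Fin d × Fin d) (Fin d × Fin d) ℝ :=
  Matrix.of fun μ ν =>
    expval ρ (canonG d μ ⊗ₖ canonG d ν)
      - expval ρ (canonG d μ ⊗ₖ 1) * expval ρ ((1 : Matrix (Fin d) (Fin d) ℂ) ⊗ₖ canonG d ν)

/-- Reduced state on the first subsystem. -/
noncomputable def redA (d : ℕ) (ρ : Matrix (Fin d × Fin d) (Fin d × Fin d) ℂ) :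
    Matrix (Fin d) (Fin d) ℂ :=
  Matrix.of fun i j => ∑ k, ρ (i, k) (j, k)

/-- Reduced state on the second subsystem. -/
noncomputable def redB (d : ℕ) (ρ : Matrix (Fin d × Fin d) (Fin d × Fin d) ℂ) :
    Matrix (Fin d) (Fin d) ℂ :=
  Matrix.of fun i j => ∑ k, ρ (k, i) (k, j)

/-- Purity tr(σ²) (real part). -/
noncomputable def purity {n : Type*} [Fintype n] (σ : Matrix n n ℂ) : ℝ :=
  ((σ * σ).trace).re

/-- The positive semidefinite square root of a positive semidefinite matrix
(the definition Mathlib had under this name, since removed). -/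
noncomputable def Matrix.PosSemidef.sqrt {n 𝕜 : Type*} [Fintype n] [DecidableEq n] [RCLike 𝕜]
    {A : Matrix n n 𝕜} (hA : A.PosSemidef) : Matrix n n 𝕜 :=
  hA.1.eigenvectorUnitary.1 * Matrix.diagonal ((↑) ∘ (√·) ∘ hA.1.eigenvalues) *
    (star hA.1.eigenvectorUnitary : Matrix n n 𝕜)

/-- Trace norm of a real matrix: sum of its singular values, i.e. tr √(XᵀX). -/
noncomputable def traceNorm {n : Type*} [Fintype n] [DecidableEq n] (X : Matrix n n ℝ) : ℝ :=
  (Matrix.posSemidef_conjTranspose_mul_self X).sqrt.trace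

/-- Schmidt rank of a pure state vector is the rank of its coefficient matrix. -/
def SchmidtRankLE (d r : ℕ) (v : Fin d × Fin d → ℂ) : Prop :=
  (Matrix.of fun j k : Fin d => v (j, k)).rank ≤ r

/-- Schmidt number at most r. -/
def SchmidtNumberLE (d r : ℕ) (ρ : Matrix (Fin d × Fin d) (Fin d × Fin d) ℂ) : Prop :=
  ∃ (n : ℕ) (p : Fin n → ℝ) (ψ : Fin n → (Fin d × Fin d → ℂ)),
    (∀ k, 0 ≤ p k) ∧ (∑ k, p k = 1) ∧ (∀ k, IsUnitVec (ψ k)) ∧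
    (∀ k, SchmidtRankLE d r (ψ k)) ∧
    ρ = ∑ k, (p k : ℂ) • pureState (ψ k)


section Aux

lemma traceNorm_eq_of_sq {n : Type*} [Fintype n] [DecidableEq n] (X S : Matrix n n ℝ)
    (hS : S.PosSemidef) (h : S ^ 2 = Xᴴ * X) : traceNorm X = S.trace := by
  have hA := Matrix.posSemidef_conjTranspose_mul_self X
  have e1 : hA.sqrt = cfc Real.sqrt (Xᴴ * X) := by
    rw [hA.1.cfc_eq]; simp [Matrix.IsHermitian.cfc, Matrix.PosSemidef.sqrt, Unitary.conjStarAlgAut_apply]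
  have e2 : cfc Real.sqrt (Xᴴ * X) = S := by
    open scoped MatrixOrder in
    rw [← cfcₙ_eq_cfc, ← CFC.sqrt_eq_real_sqrt _ hA.nonneg]
    open scoped MatrixOrder in
    exact CFC.sqrt_unique (by rw [← h, sq]) hS.nonneg
  rw [traceNorm, e1, e2]

lemma psd_aux {n : Type*} [Fintype n] [DecidableEq n] (w : n → ℝ) (hw : ∀ i, 0 ≤ w i)
    (hsum : ∑ i, w i = 1) : (Matrix.diagonal w - Matrix.vecMulVec w w).PosSemidef := by
  rw [Matrix.posSemidef_iff_dotProduct_mulVec]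
  constructor
  · ext i j
    simp only [conjTranspose_apply, Matrix.sub_apply, diagonal_apply, vecMulVec_apply, star_sub,
      star_trivial]
    rcases eq_or_ne i j with rfl | h
    · simp
    · simp [h, Ne.symm h, mul_comm]
  · intro x
    simp only [star_trivial, dotProduct, mulVec, dotProduct, Matrix.sub_apply, diagonal_apply,
      vecMulVec_apply]
    have key : ∀ i, x i * ∑ j, ((if i = j then w i else 0) - w i * w j) * x j
        = w i * x i ^ 2 - (w i * x i) * ∑ j, w j * x j := by
      intro i
      have h1 : ∀ j, ((if i = j then w i else 0) - w i * w j) * x j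
          = (if i = j then w i * x j else 0) - w i * w j * x j := by
        intro j; split <;> ring
      rw [Finset.sum_congr rfl fun j _ => h1 j, Finset.sum_sub_distrib, Finset.sum_ite_eq]
      simp only [Finset.mem_univ, if_true, Finset.mul_sum]
      rw [mul_sub]
      congr 1
      · ring
      · rw [Finset.mul_sum]
        exact Finset.sum_congr rfl fun j _ => by ring
    rw [Finset.sum_congr rfl fun i _ => key i, Finset.sum_sub_distrib, ← Finset.sum_mul]
    have hcs := Finset.sum_mul_sq_le_sq_mul_sq Finset.univ (fun i => Real.sqrt (w i))
      (fun i => Real.sqrt (w i) * x i)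
    have h2 : ∀ i, Real.sqrt (w i) * (Real.sqrt (w i) * x i) = w i * x i := by
      intro i; rw [← mul_assoc, Real.mul_self_sqrt (hw i)]
    have h3 : ∀ i, Real.sqrt (w i) ^ 2 = w i := fun i => Real.sq_sqrt (hw i)
    have h4 : ∀ i, (Real.sqrt (w i) * x i) ^ 2 = w i * x i ^ 2 := by
      intro i; rw [mul_pow, h3]
    simp only [h2, h3, h4, hsum, one_mul] at hcs
    have : (∑ i, w i * x i) * ∑ j, w j * x j = (∑ i, w i * x i) ^ 2 := by ring
    rw [this]
    linarith

lemma trace_pure_kron (d : ℕ) (lam : Fin d → ℝ)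
    (M N : Matrix (Fin d) (Fin d) ℂ) :
    (pureState (fun p : Fin d × Fin d => if p.1 = p.2 then (Real.sqrt (lam p.1) : ℂ) else 0)
      * (M ⊗ₖ N)).trace
    = ∑ j, ∑ k, ((Real.sqrt (lam j) * Real.sqrt (lam k) : ℝ) : ℂ) * (M k j * N k j) := by
  simp only [Matrix.trace, Matrix.diag_apply, Matrix.mul_apply, pureState,
    Matrix.vecMulVec_apply, Pi.star_apply, apply_ite (star : ℂ → ℂ), star_zero, Complex.ofReal_mul]
  rw [Fintype.sum_prod_type]
  simp only [Fintype.sum_prod_type, Complex.conj_ofReal, ite_mul, zero_mul, mul_ite, mul_zero,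
    RCLike.star_def, kroneckerMap_apply]
  rw [Finset.sum_comm]
  simp [Finset.sum_ite_eq, Finset.sum_ite_eq']

lemma expval_g_one (d : ℕ) (lam : Fin d → ℝ) (hpos : ∀ j, 0 ≤ lam j) (μ : Fin d × Fin d) :
    expval (pureState (fun p : Fin d × Fin d => if p.1 = p.2 then (Real.sqrt (lam p.1) : ℂ) else 0))
      (canonG d μ ⊗ₖ (1 : Matrix (Fin d) (Fin d) ℂ))
      = if μ.1 = μ.2 then lam μ.1 else 0 := by
  obtain ⟨a, b⟩ := μ
  rw [expval, trace_pure_kron]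
  rcases lt_trichotomy a b with hab | rfl | hab
  · simp [canonG, hab.ne, hab, Matrix.single, Matrix.one_apply, hab.ne',
      Finset.sum_ite_eq, Finset.sum_ite_eq', ite_and, apply_ite Complex.re,
      mul_add, mul_ite, mul_zero, Finset.sum_add_distrib]
  · simp [canonG, Matrix.single, Matrix.one_apply, ite_and,
      Finset.sum_ite_eq, Finset.sum_ite_eq', ← Complex.ofReal_mul,
      Real.mul_self_sqrt (hpos a)]
  · simp [canonG, hab.ne', hab, hab.not_gt, Matrix.single, Matrix.one_apply, hab.ne,
      Finset.sum_ite_eq, Finset.sum_ite_eq', ite_and, apply_ite Complex.im,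
      apply_ite Complex.re, mul_sub, mul_add, mul_ite, mul_zero, Finset.sum_add_distrib,
      Finset.sum_sub_distrib]

lemma expval_one_g (d : ℕ) (lam : Fin d → ℝ) (hpos : ∀ j, 0 ≤ lam j) (ν : Fin d × Fin d) :
    expval (pureState (fun p : Fin d × Fin d => if p.1 = p.2 then (Real.sqrt (lam p.1) : ℂ) else 0))
      ((1 : Matrix (Fin d) (Fin d) ℂ) ⊗ₖ canonG d ν)
      = if ν.1 = ν.2 then lam ν.1 else 0 := by
  obtain ⟨a, b⟩ := ν
  rw [expval, trace_pure_kron]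
  rcases lt_trichotomy a b with hab | rfl | hab
  · simp [canonG, hab.ne, hab, Matrix.single, Matrix.one_apply, hab.ne',
      Finset.sum_ite_eq, Finset.sum_ite_eq', ite_and, apply_ite Complex.re,
      mul_add, mul_ite, mul_zero, Finset.sum_add_distrib]
  · simp [canonG, Matrix.single, Matrix.one_apply, ite_and,
      Finset.sum_ite_eq, Finset.sum_ite_eq', ← Complex.ofReal_mul,
      Real.mul_self_sqrt (hpos a)]
  · simp [canonG, hab.ne', hab, hab.not_gt, Matrix.single, Matrix.one_apply, hab.ne,
      Finset.sum_ite_eq, Finset.sum_ite_eq', ite_and, apply_ite Complex.im,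
      apply_ite Complex.re, mul_sub, mul_add, mul_ite, mul_zero, Finset.sum_add_distrib,
      Finset.sum_sub_distrib]

lemma expval_gg (d : ℕ) (lam : Fin d → ℝ) (hpos : ∀ j, 0 ≤ lam j) (μ ν : Fin d × Fin d) :
    expval (pureState (fun p : Fin d × Fin d => if p.1 = p.2 then (Real.sqrt (lam p.1) : ℂ) else 0))
      (canonG d μ ⊗ₖ canonG d ν)
      = if μ.1 = μ.2 ∧ ν.1 = ν.2 then (if μ.1 = ν.1 then lam μ.1 else 0)
        else if μ = ν then
          (if μ.1 < μ.2 then 1 else -1) * (Real.sqrt (lam μ.1) * Real.sqrt (lam μ.2))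
        else 0 := by
  obtain ⟨a, b⟩ := μ
  obtain ⟨c, e⟩ := ν
  rw [expval, trace_pure_kron]
  rcases lt_trichotomy a b with hab | rfl | hab <;> rcases lt_trichotomy c e with hce | rfl | hce
  · simp [canonG, hab, hab.ne, hab.ne', hab.not_gt, hce, hce.ne, hce.ne', hce.not_gt,
      Matrix.single, ite_and, apply_ite Complex.re, apply_ite Complex.im,
      mul_add, add_mul, mul_sub, sub_mul, mul_ite, ite_mul, mul_zero, zero_mul,
      Finset.sum_add_distrib, Finset.sum_sub_distrib, Finset.sum_ite_eq, Finset.sum_ite_eq',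
      Prod.mk.injEq, Complex.mul_re, Complex.mul_im, Complex.ofReal_inv]
    have h2 : Real.sqrt 2 * Real.sqrt 2 = 2 := Real.mul_self_sqrt (by norm_num)
    rcases eq_or_ne a c with rfl | h
    · rcases eq_or_ne b e with rfl | h'
      · simp only [if_pos rfl, hab.ne, hab.ne', if_false]
        simp only [if_true]
        have h3 : Real.sqrt 2 ^ 2 = 2 := Real.sq_sqrt (by norm_num)
        ring_nf
        rw [h3]
        ring
      · simp [h', hab.ne, hab.ne']
    · rcases eq_or_ne b c with rfl | h2'
      · rcases eq_or_ne a e with rfl | h3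
        · exact absurd (hab.trans hce) (lt_irrefl _)
        · simp [h, h3]
      · simp [h, h2']
  · simp [canonG, hab, hab.ne, hab.ne', hab.not_gt,
      Matrix.single, ite_and, apply_ite Complex.re, apply_ite Complex.im,
      mul_add, add_mul, mul_sub, sub_mul, mul_ite, ite_mul, mul_zero, zero_mul,
      Finset.sum_add_distrib, Finset.sum_sub_distrib, Finset.sum_ite_eq, Finset.sum_ite_eq',
      Prod.mk.injEq, Complex.mul_re, Complex.mul_im, Complex.ofReal_inv]
    rcases eq_or_ne a c with rfl | h
    · simp [hab.ne']
    · simp [h]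
  · simp [canonG, hab, hab.ne, hab.ne', hab.not_gt, hce, hce.ne, hce.ne', hce.not_gt,
      Matrix.single, ite_and, apply_ite Complex.re, apply_ite Complex.im,
      mul_add, add_mul, mul_sub, sub_mul, mul_ite, ite_mul, mul_zero, zero_mul,
      Finset.sum_add_distrib, Finset.sum_sub_distrib, Finset.sum_ite_eq, Finset.sum_ite_eq',
      Prod.mk.injEq, Complex.mul_re, Complex.mul_im, Complex.ofReal_inv]
    rcases eq_or_ne a c with rfl | h
    · rcases eq_or_ne b e with rfl | h'
      · exact absurd (hab.trans hce) (lt_irrefl _)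
      · simp [h']
    · simp [h]
  · simp [canonG, hce, hce.ne, hce.ne', hce.not_gt,
      Matrix.single, ite_and, apply_ite Complex.re, apply_ite Complex.im,
      mul_add, add_mul, mul_sub, sub_mul, mul_ite, ite_mul, mul_zero, zero_mul,
      Finset.sum_add_distrib, Finset.sum_sub_distrib, Finset.sum_ite_eq, Finset.sum_ite_eq',
      Prod.mk.injEq, Complex.mul_re, Complex.mul_im, Complex.ofReal_inv]
    rcases eq_or_ne a c with rfl | h
    · simp [hce.ne]
    · simp [h]
  · simp [canonG, true_and,
      Matrix.single, ite_and, apply_ite Complex.re, apply_ite Complex.im,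
      mul_add, add_mul, mul_sub, sub_mul, mul_ite, ite_mul, mul_zero, zero_mul,
      Finset.sum_add_distrib, Finset.sum_sub_distrib, Finset.sum_ite_eq, Finset.sum_ite_eq',
      Prod.mk.injEq, Complex.mul_re, Complex.mul_im, Complex.ofReal_inv]
    rcases eq_or_ne a c with rfl | h
    · simp [Real.mul_self_sqrt (hpos a)]
    · simp [h]
  · simp [canonG, hce, hce.ne, hce.ne', hce.not_gt,
      Matrix.single, ite_and, apply_ite Complex.re, apply_ite Complex.im,
      mul_add, add_mul, mul_sub, sub_mul, mul_ite, ite_mul, mul_zero, zero_mul,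
      Finset.sum_add_distrib, Finset.sum_sub_distrib, Finset.sum_ite_eq, Finset.sum_ite_eq',
      Prod.mk.injEq, Complex.mul_re, Complex.mul_im, Complex.ofReal_inv]
    rcases eq_or_ne a c with rfl | h
    · rcases eq_or_ne a e with rfl | h'
      · exact absurd hce (lt_irrefl _)
      · simp [h']
    · simp [h]
  · simp [canonG, hab, hab.ne, hab.ne', hab.not_gt, hce, hce.ne, hce.ne', hce.not_gt,
      Matrix.single, ite_and, apply_ite Complex.re, apply_ite Complex.im,
      mul_add, add_mul, mul_sub, sub_mul, mul_ite, ite_mul, mul_zero, zero_mul,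
      Finset.sum_add_distrib, Finset.sum_sub_distrib, Finset.sum_ite_eq, Finset.sum_ite_eq',
      Prod.mk.injEq, Complex.mul_re, Complex.mul_im, Complex.ofReal_inv]
    rcases eq_or_ne a c with rfl | h
    · rcases eq_or_ne b e with rfl | h'
      · exact absurd (hce.trans hab) (lt_irrefl _)
      · simp [h']
    · simp [h]
  · simp [canonG, hab, hab.ne, hab.ne', hab.not_gt,
      Matrix.single, ite_and, apply_ite Complex.re, apply_ite Complex.im,
      mul_add, add_mul, mul_sub, sub_mul, mul_ite, ite_mul, mul_zero, zero_mul,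
      Finset.sum_add_distrib, Finset.sum_sub_distrib, Finset.sum_ite_eq, Finset.sum_ite_eq',
      Prod.mk.injEq, Complex.mul_re, Complex.mul_im, Complex.ofReal_inv]
    rcases eq_or_ne a c with rfl | h
    · simp [hab.ne]
    · simp [h]
  · simp [canonG, hab, hab.ne, hab.ne', hab.not_gt, hce, hce.ne, hce.ne', hce.not_gt,
      Matrix.single, ite_and, apply_ite Complex.re, apply_ite Complex.im,
      mul_add, add_mul, mul_sub, sub_mul, mul_ite, ite_mul, mul_zero, zero_mul,
      Finset.sum_add_distrib, Finset.sum_sub_distrib, Finset.sum_ite_eq, Finset.sum_ite_eq',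
      Prod.mk.injEq, Complex.mul_re, Complex.mul_im, Complex.ofReal_inv]
    have h2 : Real.sqrt 2 * Real.sqrt 2 = 2 := Real.mul_self_sqrt (by norm_num)
    rcases eq_or_ne a c with rfl | h
    · rcases eq_or_ne b e with rfl | h'
      · simp only [if_pos rfl, hab.ne, hab.ne', if_false]
        simp only [if_true]
        have h3 : Real.sqrt 2 ^ 2 = 2 := Real.sq_sqrt (by norm_num)
        ring_nf
        rw [h3]
        ring
      · simp [h', hab.ne, hab.ne']
    · rcases eq_or_ne b c with rfl | h2'
      · rcases eq_or_ne a e with rfl | h3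
        · exact absurd (hce.trans hab) (lt_irrefl _)
        · simp [h, h3]
      · simp [h, h2']


noncomputable def Xf (d : ℕ) (lam : Fin d → ℝ) :
    Matrix (Fin d × Fin d) (Fin d × Fin d) ℝ :=
  Matrix.of fun μ ν =>
    if μ.1 = μ.2 ∧ ν.1 = ν.2 then (if μ.1 = ν.1 then lam μ.1 else 0) - lam μ.1 * lam ν.1
    else if μ = ν then
      (if μ.1 < μ.2 then 1 else -1) * (Real.sqrt (lam μ.1) * Real.sqrt (lam μ.2))
    else 0

noncomputable def Sf (d : ℕ) (lam : Fin d → ℝ) :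
    Matrix (Fin d × Fin d) (Fin d × Fin d) ℝ :=
  Matrix.of fun μ ν =>
    if μ.1 = μ.2 ∧ ν.1 = ν.2 then (if μ.1 = ν.1 then lam μ.1 else 0) - lam μ.1 * lam ν.1
    else if μ = ν then Real.sqrt (lam μ.1) * Real.sqrt (lam μ.2)
    else 0

lemma crossCov_eq_Xf (d : ℕ) (lam : Fin d → ℝ) (hpos : ∀ j, 0 ≤ lam j) :
    crossCov d (pureState
      (fun p : Fin d × Fin d => if p.1 = p.2 then (Real.sqrt (lam p.1) : ℂ) else 0))
      = Xf d lam := by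
  ext μ ν
  show expval _ _ - expval _ _ * expval _ _ = _
  rw [expval_gg d lam hpos, expval_g_one d lam hpos, expval_one_g d lam hpos]
  by_cases h1 : μ.1 = μ.2 <;> by_cases h2 : ν.1 = ν.2 <;>
    by_cases h3 : μ = ν <;> simp_all [Xf]

lemma Sf_decomp (d : ℕ) (lam : Fin d → ℝ) (hpos : ∀ j, 0 ≤ lam j) :
    Sf d lam =
      (Matrix.diagonal (fun μ : Fin d × Fin d => if μ.1 = μ.2 then lam μ.1 else 0)
        - Matrix.vecMulVec (fun μ : Fin d × Fin d => if μ.1 = μ.2 then lam μ.1 else 0)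
            (fun μ : Fin d × Fin d => if μ.1 = μ.2 then lam μ.1 else 0))
      + Matrix.diagonal (fun μ : Fin d × Fin d =>
          if μ.1 = μ.2 then 0 else Real.sqrt (lam μ.1) * Real.sqrt (lam μ.2)) := by
  ext μ ν
  simp only [Sf, Matrix.of_apply, Matrix.add_apply, Matrix.sub_apply, Matrix.diagonal_apply,
    Matrix.vecMulVec_apply]
  have key : ∀ j, Real.sqrt (lam j) ^ 2 = lam j := fun j => Real.sq_sqrt (hpos j)
  by_cases h1 : μ.1 = μ.2 <;> by_cases h2 : ν.1 = ν.2 <;> by_cases h3 : μ = ν <;>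
    simp_all [Prod.ext_iff]

lemma Sf_posSemidef (d : ℕ) (lam : Fin d → ℝ) (hpos : ∀ j, 0 ≤ lam j)
    (hsum : ∑ j, lam j = 1) : (Sf d lam).PosSemidef := by
  rw [Sf_decomp d lam hpos]
  refine Matrix.PosSemidef.add (psd_aux _ (fun μ => ?_) ?_)
    (Matrix.posSemidef_diagonal_iff.2 fun μ => ?_)
  · split
    · exact hpos _
    · exact le_rfl
  · rw [Fintype.sum_prod_type]
    simpa [Finset.sum_ite_eq] using hsum
  · split
    · exact le_rfl
    · exact mul_nonneg (Real.sqrt_nonneg _) (Real.sqrt_nonneg _)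

noncomputable def sgn (d : ℕ) : Fin d × Fin d → ℝ := fun μ =>
  if μ.1 = μ.2 ∨ μ.1 < μ.2 then 1 else -1

lemma Xf_eq_sgn_mul (d : ℕ) (lam : Fin d → ℝ) :
    Xf d lam = Matrix.diagonal (sgn d) * Sf d lam := by
  ext μ ν
  rw [Matrix.diagonal_mul]
  simp only [Xf, Sf, sgn, Matrix.of_apply]
  by_cases h1 : μ.1 = μ.2 <;> by_cases h2 : ν.1 = ν.2 <;> by_cases h3 : μ = ν <;>
    by_cases h4 : μ.1 < μ.2 <;> simp_all

lemma Sf_sq_eq (d : ℕ) (lam : Fin d → ℝ) (hpos : ∀ j, 0 ≤ lam j)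
    (hsum : ∑ j, lam j = 1) :
    Sf d lam ^ 2 = (Xf d lam)ᴴ * Xf d lam := by
  have hS := Sf_posSemidef d lam hpos hsum
  have hsym : (Sf d lam)ᵀ = Sf d lam := by
    rw [← Matrix.conjTranspose_eq_transpose_of_trivial]; exact hS.1
  have hsgn : Matrix.diagonal (sgn d) * Matrix.diagonal (sgn d) = 1 := by
    rw [Matrix.diagonal_mul_diagonal]
    have : ∀ μ, sgn d μ * sgn d μ = 1 := by
      intro μ; rw [sgn]; split <;> norm_num
    simp [this, Matrix.diagonal_one]
  rw [Xf_eq_sgn_mul, Matrix.conjTranspose_eq_transpose_of_trivial, Matrix.transpose_mul,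
    Matrix.diagonal_transpose, Matrix.mul_assoc, ← Matrix.mul_assoc (Matrix.diagonal (sgn d)),
    hsgn, Matrix.one_mul, hsym, pow_two]

lemma Sf_trace (d : ℕ) (lam : Fin d → ℝ) (hpos : ∀ j, 0 ≤ lam j) :
    (Sf d lam).trace = (∑ j, Real.sqrt (lam j)) ^ 2 - ∑ j, lam j ^ 2 := by
  have key : ∀ a b : Fin d, (Sf d lam) (a, b) (a, b)
      = Real.sqrt (lam a) * Real.sqrt (lam b) + (if a = b then -(lam a ^ 2) else 0) := by
    intro a b
    simp only [Sf, Matrix.of_apply]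
    rcases eq_or_ne a b with rfl | h
    · simp [Real.mul_self_sqrt (hpos a)]; ring
    · simp [h]
  rw [Matrix.trace]
  rw [Fintype.sum_prod_type]
  simp only [Matrix.diag_apply, key, Finset.sum_add_distrib, Finset.sum_ite_eq,
    Finset.mem_univ, if_true, ← Finset.mul_sum, ← Finset.sum_mul, Finset.sum_neg_distrib]
  ring_nf

lemma redA_eq (d : ℕ) (lam : Fin d → ℝ) :
    redA d (pureState
      (fun p : Fin d × Fin d => if p.1 = p.2 then (Real.sqrt (lam p.1) : ℂ) else 0))
      = Matrix.diagonal (fun i => ((Real.sqrt (lam i) * Real.sqrt (lam i) : ℝ) : ℂ)) := by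
  ext i j
  simp only [redA, Matrix.of_apply, pureState, Matrix.vecMulVec_apply, Pi.star_apply,
    apply_ite (star : ℂ → ℂ), star_zero, Complex.conj_ofReal, RCLike.star_def,
    Matrix.diagonal_apply]
  rcases eq_or_ne i j with rfl | h
  · simp [Finset.sum_ite_eq, Complex.ofReal_mul]
  · simp [ite_mul, zero_mul, mul_ite, mul_zero, Finset.sum_ite_eq, h, Ne.symm h]

lemma purity_redA (d : ℕ) (lam : Fin d → ℝ) (hpos : ∀ j, 0 ≤ lam j) :
    purity (redA d (pureState
      (fun p : Fin d × Fin d => if p.1 = p.2 then (Real.sqrt (lam p.1) : ℂ) else 0)))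
      = ∑ j, lam j ^ 2 := by
  rw [redA_eq, purity, Matrix.diagonal_mul_diagonal, Matrix.trace_diagonal]
  have : ∀ j, Real.sqrt (lam j) * Real.sqrt (lam j) = lam j :=
    fun j => Real.mul_self_sqrt (hpos j)
  simp only [this, ← Complex.ofReal_mul, ← Complex.ofReal_sum, Complex.ofReal_re]
  exact Finset.sum_congr rfl fun j _ => (sq (lam j)).symm

end Aux

/-- For |ψ⟩ = Σ_j √λ_j |jj⟩, the cross-covariance block satisfies
tr|X_ψ| = (Σ_j √λ_j)² - Σ_j λ_j²; moreover tr(ρ_a²) = Σ_j λ_j², and if λ has at most r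
nonzero entries then tr|X_ψ| ≤ r - tr(ρ_a²). -/
theorem cross_covariance_traceNorm_of_schmidt_form_state
    (d r : ℕ) (lam : Fin d → ℝ) (hpos : ∀ j, 0 ≤ lam j) (hsum : ∑ j, lam j = 1)
    (ψ : Fin d × Fin d → ℂ)
    (hψ : ψ = fun p => if p.1 = p.2 then (Real.sqrt (lam p.1) : ℂ) else 0) :
    traceNorm (crossCov d (pureState ψ)) = (∑ j, Real.sqrt (lam j)) ^ 2 - ∑ j, (lam j) ^ 2 ∧
    purity (redA d (pureState ψ)) = ∑ j, (lam j) ^ 2 ∧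
    ((Finset.univ.filter fun j => lam j ≠ 0).card ≤ r →
      traceNorm (crossCov d (pureState ψ)) ≤ r - purity (redA d (pureState ψ))) := by
  subst hψ
  have h1 : traceNorm (crossCov d (pureState
      (fun p : Fin d × Fin d => if p.1 = p.2 then (Real.sqrt (lam p.1) : ℂ) else 0)))
      = (∑ j, Real.sqrt (lam j)) ^ 2 - ∑ j, lam j ^ 2 := by
    rw [crossCov_eq_Xf d lam hpos,
      traceNorm_eq_of_sq _ (Sf d lam) (Sf_posSemidef d lam hpos hsum)
        (Sf_sq_eq d lam hpos hsum),
      Sf_trace d lam hpos]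
  have h2 := purity_redA d lam hpos
  refine ⟨h1, h2, fun hr => ?_⟩
  rw [h1, h2]
  have hle : (∑ j, Real.sqrt (lam j)) ^ 2 ≤ (r : ℝ) := by
    classical
    set s := Finset.univ.filter fun j => lam j ≠ 0 with hs
    have hsm : ∑ j ∈ s, lam j = 1 := by
      rw [hs, Finset.sum_filter_ne_zero]; exact hsum
    have hequ : ∑ j, Real.sqrt (lam j) = ∑ j ∈ s, Real.sqrt (lam j) := by
      rw [← Finset.sum_filter_add_sum_filter_not Finset.univ (fun j => lam j ≠ 0)
        (fun j => Real.sqrt (lam j))]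
      have hz : ∑ j ∈ Finset.univ.filter (fun j => ¬ lam j ≠ 0), Real.sqrt (lam j) = 0 := by
        apply Finset.sum_eq_zero; intro j hj
        simp only [Finset.mem_filter, not_not] at hj
        rw [hj.2, Real.sqrt_zero]
      rw [hz, add_zero, hs]
    have hcs := Finset.sum_mul_sq_le_sq_mul_sq s (fun _ => (1:ℝ)) (fun j => Real.sqrt (lam j))
    have hsq : ∑ j ∈ s, Real.sqrt (lam j) ^ 2 = ∑ j ∈ s, lam j :=
      Finset.sum_congr rfl fun j _ => Real.sq_sqrt (hpos j)
    simp only [one_mul, one_pow, hsq, hsm, Finset.sum_const, nsmul_eq_mul, mul_one] at hcs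
    rw [hequ]
    calc (∑ j ∈ s, Real.sqrt (lam j)) ^ 2 ≤ (s.card : ℝ) := hcs
    _ ≤ (r : ℝ) := by exact_mod_cast hr
  linarith
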